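/- Let H be a critical, non-circular 3-hypergraph with |V(H)| ≥ 5, and let C be a component of 𝒫(H) of even order (a path, with isomorphism φ_C from P_{v(C)} onto C). Then for every edge e ∈ E(H) with e ∩ V(C) ≠ ∅ and e \ V(C) ≠ ∅, there exist i, j ∈ {0,…,v(C)/2 − 1} with i ≤ j such that e ∩ V(C) = {φ_C(2i), φ_C(2j+1)}. -/

import Mathlib

/-- `M` is a module of the hypergraph with vertex set `verts` and edge set `edges`. -/
def IsModule {α : Type*} [DecidableEq α] (verts : Finset α) (edges : Set (Finset α))
    (M : Finset α) : Prop :=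
  M ⊆ verts ∧ ∀ e ∈ edges, (e ∩ M).Nonempty → (e \ M).Nonempty →
    ∃ m ∈ M, e ∩ M = {m} ∧ ∀ n ∈ M, (e \ {m}) ∪ {n} ∈ edges

/-- `(verts, edges)` is a hypergraph: edges are nonempty subsets of `verts`. -/
def IsHypergraph {α : Type*} (verts : Finset α) (edges : Set (Finset α)) : Prop :=
  ∀ e ∈ edges, e ⊆ verts ∧ e.Nonempty

/-- `(verts, edges)` is a 3-hypergraph: edges are 3-element subsets of `verts`. -/
def Is3Hypergraph {α : Type*} (verts : Finset α) (edges : Set (Finset α)) : Prop :=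
  ∀ e ∈ edges, e ⊆ verts ∧ e.card = 3

/-- Edges of the subhypergraph induced by `W`. -/
def induceEdges {α : Type*} (W : Finset α) (edges : Set (Finset α)) : Set (Finset α) :=
  {e ∈ edges | e ⊆ W}

/-- A hypergraph is prime if it has at least 3 vertices and all its modules are trivial. -/
def IsPrime {α : Type*} [DecidableEq α] (verts : Finset α) (edges : Set (Finset α)) : Prop :=
  3 ≤ verts.card ∧ ∀ M, IsModule verts edges M → M = ∅ ∨ M = verts ∨ ∃ v, M = {v}

/-- A prime hypergraph is critical if removing any vertex destroys primality. -/
def IsCritical {α : Type*} [DecidableEq α] (verts : Finset α) (edges : Set (Finset α)) : Prop :=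
  IsPrime verts edges ∧
    ∀ v ∈ verts, ¬ IsPrime (verts.erase v) (induceEdges (verts.erase v) edges)

/-- Adjacency in the primality graph: `v ≠ w` and `H - {v, w}` is prime. -/
def PrimAdj {α : Type*} [DecidableEq α] (verts : Finset α) (edges : Set (Finset α))
    (v w : α) : Prop :=
  v ≠ w ∧ v ∈ verts ∧ w ∈ verts ∧
    IsPrime (verts \ {v, w}) (induceEdges (verts \ {v, w}) edges)


/-- `(verts, arc)` is a tournament: the arc relation is irreflexive and, on distinct
vertices of `verts`, exactly one of `arc x y`, `arc y x` holds. -/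
def IsTournament {α : Type*} (verts : Finset α) (arc : α → α → Prop) : Prop :=
  (∀ x, ¬ arc x x) ∧ ∀ x ∈ verts, ∀ y ∈ verts, x ≠ y → (arc x y ↔ ¬ arc y x)

/-- `M` is a module of the tournament `(verts, arc)`. -/
def TournMod {α : Type*} (verts : Finset α) (arc : α → α → Prop) (M : Finset α) : Prop :=
  M ⊆ verts ∧ ∀ x ∈ M, ∀ y ∈ M, ∀ v ∈ verts, arc x v → arc v y → v ∈ M

/-- The edge set of the C₃-structure of a tournament: the 3-sets inducing a 3-cycle. -/
def c3Edges {α : Type*} [DecidableEq α] (verts : Finset α) (arc : α → α → Prop) :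
    Set (Finset α) :=
  {e | ∃ x y z, x ∈ verts ∧ y ∈ verts ∧ z ∈ verts ∧
    x ≠ y ∧ y ≠ z ∧ x ≠ z ∧ arc x y ∧ arc y z ∧ arc z x ∧ e = {x, y, z}}

/-- Arc relation of the tournament `T_p` on `{0, …, p-1}`: obtained from the transitive
tournament (arcs `i j` for `i < j`) by reversing all arcs between even and odd vertices. -/
def arcT (i j : ℕ) : Prop :=
  (i < j ∧ i % 2 = j % 2) ∨ (j < i ∧ i % 2 ≠ j % 2)

/-- A 3-hypergraph is circular if its order is odd and it is isomorphic to
`C₃(T_{v(H)})`. -/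
def IsCircular {α : Type*} [DecidableEq α] (verts : Finset α) (edges : Set (Finset α)) : Prop :=
  Odd verts.card ∧ ∃ f : α → ℕ, Set.InjOn f verts ∧
    verts.image f = Finset.range verts.card ∧
    ∀ e : Finset α, e ⊆ verts →
      (e ∈ edges ↔ e.image f ∈ c3Edges (Finset.range verts.card) arcT)

section Helpers
variable {α : Type*} [DecidableEq α]

lemma mem_induceEdges {W : Finset α} {E : Set (Finset α)} {e : Finset α} :
    e ∈ induceEdges W E ↔ e ∈ E ∧ e ⊆ W := Iff.rfl

lemma image_inter_injOn {σ : α → α} {Q s t : Finset α} (hinj : Set.InjOn σ (Q : Set α))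
    (hs : s ⊆ Q) (ht : t ⊆ Q) : (s ∩ t).image σ = s.image σ ∩ t.image σ := by
  ext x
  simp only [Finset.mem_image, Finset.mem_inter]
  constructor
  · rintro ⟨a, ⟨has, hat⟩, rfl⟩
    exact ⟨⟨a, has, rfl⟩, ⟨a, hat, rfl⟩⟩
  · rintro ⟨⟨a, has, rfl⟩, ⟨b, hbt, hba⟩⟩
    have hb : b = a := hinj (ht hbt) (hs has) hba
    exact ⟨a, ⟨has, hb ▸ hbt⟩, rfl⟩

lemma image_sdiff_injOn {σ : α → α} {Q s t : Finset α} (hinj : Set.InjOn σ (Q : Set α))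
    (hs : s ⊆ Q) (ht : t ⊆ Q) : (s \ t).image σ = s.image σ \ t.image σ := by
  ext x
  simp only [Finset.mem_image, Finset.mem_sdiff]
  constructor
  · rintro ⟨a, ⟨has, hat⟩, rfl⟩
    refine ⟨⟨a, has, rfl⟩, ?_⟩
    rintro ⟨b, hbt, hba⟩
    exact hat ((hinj (ht hbt) (hs has) hba) ▸ hbt)
  · rintro ⟨⟨a, has, rfl⟩, hnot⟩
    exact ⟨a, ⟨has, fun hat => hnot ⟨a, hat, rfl⟩⟩, rfl⟩

lemma isPrime_of_image {P Q : Finset α} {E : Set (Finset α)} {σ : α → α}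
    (hinj : Set.InjOn σ (Q : Set α)) (himg : Q.image σ = P)
    (hfwd : ∀ e ∈ induceEdges Q E, e.image σ ∈ induceEdges P E)
    (hbwd : ∀ e' ∈ induceEdges P E, ∃ e ∈ induceEdges Q E, e.image σ = e')
    (hP : IsPrime P (induceEdges P E)) : IsPrime Q (induceEdges Q E) := by
  have hcard : Q.card = P.card := by rw [← himg, Finset.card_image_of_injOn hinj]
  constructor
  · rw [hcard]; exact hP.1
  · intro N hN
    have hNQ : N ⊆ Q := hN.1
    have hNmod : IsModule P (induceEdges P E) (N.image σ) := by
      constructor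
      · rw [← himg]; exact Finset.image_subset_image hNQ
      · intro e' he' h1 h2
        obtain ⟨e, he, rfl⟩ := hbwd e' he'
        have heQ : e ⊆ Q := (mem_induceEdges.mp he).2
        have hint : (e ∩ N).image σ = e.image σ ∩ N.image σ :=
          image_inter_injOn hinj heQ hNQ
        have hsd : (e \ N).image σ = e.image σ \ N.image σ :=
          image_sdiff_injOn hinj heQ hNQ
        have h1' : (e ∩ N).Nonempty := by
          rw [← Finset.image_nonempty (f := σ), hint]; exact h1
        have h2' : (e \ N).Nonempty := by
          rw [← Finset.image_nonempty (f := σ), hsd]; exact h2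
        obtain ⟨mm, hmmN, hi, hsw⟩ := hN.2 e he h1' h2'
        refine ⟨σ mm, Finset.mem_image_of_mem σ hmmN, ?_, ?_⟩
        · rw [← hint, hi, Finset.image_singleton]
        · rintro n' hn'
          obtain ⟨n, hn, rfl⟩ := Finset.mem_image.mp hn'
          have hsw' := hfwd _ (hsw n hn)
          have hmme : mm ∈ e := by
            have : mm ∈ e ∩ N := by rw [hi]; exact Finset.mem_singleton_self mm
            exact (Finset.mem_inter.mp this).1
          have hcalc : ((e \ {mm}) ∪ {n}).image σ = (e.image σ \ {σ mm}) ∪ {σ n} := by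
            rw [Finset.image_union, Finset.image_singleton,
              image_sdiff_injOn hinj heQ (Finset.singleton_subset_iff.mpr (heQ hmme)),
              Finset.image_singleton]
          rwa [hcalc] at hsw'
    rcases hP.2 (N.image σ) hNmod with h | h | ⟨x, hx⟩
    · exact Or.inl (Finset.image_eq_empty.mp h)
    · refine Or.inr (Or.inl ?_)
      apply Finset.eq_of_subset_of_card_le hNQ
      have hNc : (N.image σ).card = N.card :=
        Finset.card_image_of_injOn (hinj.mono (Finset.coe_subset.mpr hNQ))
      rw [h] at hNc
      omega
    · refine Or.inr (Or.inr ?_)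
      have : N.card = 1 := by
        have hNc : (N.image σ).card = N.card :=
          Finset.card_image_of_injOn (hinj.mono (Finset.coe_subset.mpr hNQ))
        rw [hx, Finset.card_singleton] at hNc
        omega
      exact Finset.card_eq_one.mp this

lemma module_pair_swap {X : Finset α} {E' : Set (Finset α)} {p q : α}
    (h : IsModule X E' {p, q}) {e : Finset α} (he : e ∈ E') (hp : p ∈ e)
    (hne : (e \ {p, q}).Nonempty) : (e \ {p}) ∪ {q} ∈ E' := by
  obtain ⟨mm, hmm, hint, hsw⟩ := h.2 e he
    ⟨p, Finset.mem_inter.mpr ⟨hp, Finset.mem_insert_self p {q}⟩⟩ hne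
  have hmp : mm = p := by
    have hpint : p ∈ e ∩ ({p, q} : Finset α) :=
      Finset.mem_inter.mpr ⟨hp, Finset.mem_insert_self p {q}⟩
    rw [hint, Finset.mem_singleton] at hpint
    exact hpint.symm
  subst hmp
  exact hsw q (Finset.mem_insert_of_mem (Finset.mem_singleton_self q))

end Helpers

section Helpers2
variable {α : Type*} [DecidableEq α]

lemma image_swap_of_mem {u w : α} {e : Finset α} (hu : u ∈ e) :
    e.image (fun x => if x = u then w else x) = insert w (e.erase u) := by
  ext x
  constructor
  · intro hx
    obtain ⟨a, ha, rfl⟩ := Finset.mem_image.mp hx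
    by_cases hau : a = u
    · subst hau; simp
    · rw [if_neg hau]
      exact Finset.mem_insert_of_mem (Finset.mem_erase.mpr ⟨hau, ha⟩)
  · intro hx
    rcases Finset.mem_insert.mp hx with rfl | hx'
    · exact Finset.mem_image.mpr ⟨u, hu, if_pos rfl⟩
    · obtain ⟨hxu, hxe⟩ := Finset.mem_erase.mp hx'
      exact Finset.mem_image.mpr ⟨x, hxe, if_neg hxu⟩

lemma image_swap_of_not_mem {u w : α} {e : Finset α} (hu : u ∉ e) :
    e.image (fun x => if x = u then w else x) = e := by
  ext x
  simp only [Finset.mem_image]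
  constructor
  · rintro ⟨a, ha, rfl⟩
    rw [if_neg (fun h => hu (by rw [h] at ha; exact ha))]
    exact ha
  · intro hx
    exact ⟨x, hx, if_neg (fun h => hu (by rw [h] at hx; exact hx))⟩

lemma sdiff_pair_nonempty {E : Set (Finset α)} {verts : Finset α}
    (h3 : Is3Hypergraph verts E) {e : Finset α} (he : e ∈ E) (p q : α) :
    (e \ {p, q}).Nonempty := by
  have hc := (h3 e he).2
  have h2 : ({p, q} : Finset α).card ≤ 2 := by
    refine le_trans (Finset.card_insert_le p {q}) ?_
    simp
  have := Finset.le_card_sdiff ({p, q} : Finset α) e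
  rw [← Finset.card_pos]
  omega

lemma swap_prime {verts : Finset α} {E : Set (Finset α)} (h3 : Is3Hypergraph verts E)
    {v u w : α} (hv : v ∈ verts) (hu : u ∈ verts) (hw : w ∈ verts)
    (huv : u ≠ v) (hwv : w ≠ v) (huw : u ≠ w)
    (hmod : IsModule (verts.erase v) (induceEdges (verts.erase v) E) {u, w})
    (hP : IsPrime (verts \ {v, u}) (induceEdges (verts \ {v, u}) E)) :
    IsPrime (verts \ {v, w}) (induceEdges (verts \ {v, w}) E) := by
  set σ : α → α := fun x => if x = u then w else x with hσ
  have hQmem : ∀ x, x ∈ verts \ {v, w} ↔ x ∈ verts ∧ x ≠ v ∧ x ≠ w := by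
    intro x
    rw [Finset.mem_sdiff, Finset.mem_insert, Finset.mem_singleton]
    tauto
  have hPmem : ∀ x, x ∈ verts \ {v, u} ↔ x ∈ verts ∧ x ≠ v ∧ x ≠ u := by
    intro x
    rw [Finset.mem_sdiff, Finset.mem_insert, Finset.mem_singleton]
    tauto
  have hQerase : (verts \ {v, w}) ⊆ verts.erase v := by
    intro x hx; rw [hQmem] at hx; exact Finset.mem_erase.mpr ⟨hx.2.1, hx.1⟩
  have hPerase : (verts \ {v, u}) ⊆ verts.erase v := by
    intro x hx; rw [hPmem] at hx; exact Finset.mem_erase.mpr ⟨hx.2.1, hx.1⟩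
  apply isPrime_of_image (σ := σ) (P := verts \ {v, u}) ?_ ?_ ?_ ?_ hP
  · -- InjOn
    intro x hx y hy hxy
    have hx' := (hQmem x).mp (Finset.mem_coe.mp hx)
    have hy' := (hQmem y).mp (Finset.mem_coe.mp hy)
    by_cases hxu : x = u <;> by_cases hyu : y = u
    · rw [hxu, hyu]
    · exfalso
      simp only [hσ, if_pos hxu, if_neg hyu] at hxy
      exact hy'.2.2 hxy.symm
    · exfalso
      simp only [hσ, if_neg hxu, if_pos hyu] at hxy
      exact hx'.2.2 hxy
    · simpa [hσ, if_neg hxu, if_neg hyu] using hxy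
  · -- image
    ext x
    simp only [Finset.mem_image]
    constructor
    · rintro ⟨a, ha, rfl⟩
      rw [hQmem] at ha
      by_cases hau : a = u
      · simp only [hσ, if_pos hau]
        rw [hPmem]; exact ⟨hw, hwv, (Ne.symm huw)⟩
      · simp only [hσ, if_neg hau]
        rw [hPmem]; exact ⟨ha.1, ha.2.1, hau⟩
    · intro hx
      rw [hPmem] at hx
      by_cases hxw : x = w
      · refine ⟨u, ?_, by simp [hσ, hxw]⟩
        rw [hQmem]; exact ⟨hu, huv, huw⟩
      · refine ⟨x, ?_, by simp [hσ, hx.2.2]⟩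
        rw [hQmem]; exact ⟨hx.1, hx.2.1, hxw⟩
  · -- forward edges
    intro e he
    obtain ⟨heE, heQ⟩ := mem_induceEdges.mp he
    by_cases hue : u ∈ e
    · rw [image_swap_of_mem hue]
      have hwe : w ∉ e := fun hwe => ((hQmem w).mp (heQ hwe)).2.2 rfl
      have he' : e ∈ induceEdges (verts.erase v) E :=
        mem_induceEdges.mpr ⟨heE, fun x hx => hQerase (heQ hx)⟩
      have := module_pair_swap hmod he' hue (sdiff_pair_nonempty h3 heE u w)
      obtain ⟨hE2, hsub2⟩ := mem_induceEdges.mp this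
      have heq : (e \ {u}) ∪ {w} = insert w (e.erase u) := by
        rw [Finset.erase_eq, Finset.insert_eq, Finset.union_comm]
      rw [heq] at hE2 hsub2
      refine mem_induceEdges.mpr ⟨hE2, ?_⟩
      intro x hx
      rcases Finset.mem_insert.mp hx with rfl | hx'
      · rw [hPmem]; exact ⟨hw, hwv, Ne.symm huw⟩
      · obtain ⟨hxu, hxe⟩ := Finset.mem_erase.mp hx'
        rw [hPmem]
        exact ⟨(Finset.mem_sdiff.mp (heQ hxe)).1, ((hQmem x).mp (heQ hxe)).2.1, hxu⟩
    · rw [image_swap_of_not_mem hue]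
      refine mem_induceEdges.mpr ⟨heE, ?_⟩
      intro x hx
      rw [hPmem]
      exact ⟨((hQmem x).mp (heQ hx)).1, ((hQmem x).mp (heQ hx)).2.1,
        fun h => hue (h ▸ hx)⟩
  · -- backward edges
    intro e' he'
    obtain ⟨heE, heP⟩ := mem_induceEdges.mp he'
    have hue' : u ∉ e' := fun h => ((hPmem u).mp (heP h)).2.2 rfl
    by_cases hwe : w ∈ e'
    · refine ⟨(e' \ {w}) ∪ {u}, ?_, ?_⟩
      · have he'' : e' ∈ induceEdges (verts.erase v) E :=
          mem_induceEdges.mpr ⟨heE, fun x hx => hPerase (heP hx)⟩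
        have hmod' : IsModule (verts.erase v) (induceEdges (verts.erase v) E) {w, u} := by
          rwa [Finset.pair_comm]
        have := module_pair_swap hmod' he'' hwe (sdiff_pair_nonempty h3 heE w u)
        obtain ⟨hE2, hsub2⟩ := mem_induceEdges.mp this
        refine mem_induceEdges.mpr ⟨hE2, ?_⟩
        intro x hx
        rcases Finset.mem_union.mp hx with hx' | hx'
        · obtain ⟨hxe, hxw⟩ := Finset.mem_sdiff.mp hx'
          rw [hQmem]
          exact ⟨((hPmem x).mp (heP hxe)).1, ((hPmem x).mp (heP hxe)).2.1,
            fun h => hxw (by simp [h])⟩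
        · rw [Finset.mem_singleton] at hx'
          subst hx'
          rw [hQmem]; exact ⟨hu, huv, huw⟩
      · have hunion : (e' \ {w}) ∪ {u} = insert u (e'.erase w) := by
          rw [Finset.erase_eq, Finset.insert_eq, Finset.union_comm]
        rw [hunion, image_swap_of_mem (Finset.mem_insert_self u _)]
        rw [Finset.erase_insert (fun h => hue' (Finset.mem_of_mem_erase h))]
        exact Finset.insert_erase hwe
    · refine ⟨e', ?_, image_swap_of_not_mem hue'⟩
      refine mem_induceEdges.mpr ⟨heE, ?_⟩
      intro x hx
      rw [hQmem]
      exact ⟨((hPmem x).mp (heP hx)).1, ((hPmem x).mp (heP hx)).2.1,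
        fun h => hwe (h ▸ hx)⟩

end Helpers2

section Helpers3
variable {α : Type*} [DecidableEq α]

lemma isModule_inter {X Y : Finset α} {E : Set (Finset α)} {M : Finset α}
    (hM : IsModule X (induceEdges X E) M) (hYX : Y ⊆ X) :
    IsModule Y (induceEdges Y E) (M ∩ Y) := by
  constructor
  · exact Finset.inter_subset_right
  · intro e he h1 h2
    obtain ⟨heE, heY⟩ := mem_induceEdges.mp he
    have heX : e ∈ induceEdges X E := mem_induceEdges.mpr ⟨heE, heY.trans hYX⟩
    have hint : e ∩ (M ∩ Y) = e ∩ M := by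
      ext x
      simp only [Finset.mem_inter]
      exact ⟨fun ⟨h1', h2', _⟩ => ⟨h1', h2'⟩, fun ⟨h1', h2'⟩ => ⟨h1', h2', heY h1'⟩⟩
    have hsd : e \ (M ∩ Y) = e \ M := by
      ext x
      simp only [Finset.mem_sdiff, Finset.mem_inter]
      constructor
      · rintro ⟨hxe, hx⟩
        exact ⟨hxe, fun hxM => hx ⟨hxM, heY hxe⟩⟩
      · rintro ⟨hxe, hx⟩
        exact ⟨hxe, fun h => hx h.1⟩
    rw [hint] at h1
    rw [hsd] at h2
    obtain ⟨mm, hmmM, hi, hsw⟩ := hM.2 e heX h1 h2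
    have hmme : mm ∈ e := by
      have : mm ∈ e ∩ M := by rw [hi]; exact Finset.mem_singleton_self mm
      exact (Finset.mem_inter.mp this).1
    refine ⟨mm, Finset.mem_inter.mpr ⟨hmmM, heY hmme⟩, by rw [hint, hi], ?_⟩
    intro n hn
    obtain ⟨hE2, hsub2⟩ := mem_induceEdges.mp (hsw n (Finset.mem_inter.mp hn).1)
    refine mem_induceEdges.mpr ⟨hE2, ?_⟩
    intro x hx
    rcases Finset.mem_union.mp hx with hx' | hx'
    · exact heY (Finset.mem_sdiff.mp hx').1
    · rw [Finset.mem_singleton] at hx'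
      exact hx' ▸ (Finset.mem_inter.mp hn).2

lemma dichotomy {verts : Finset α} {E : Set (Finset α)} (h3 : Is3Hypergraph verts E)
    (h5 : 5 ≤ verts.card) {v u : α} (hv : v ∈ verts) (hu : u ∈ verts) (hvu : v ≠ u)
    (hprime : IsPrime (verts \ {v, u}) (induceEdges (verts \ {v, u}) E))
    (hnp : ¬ IsPrime (verts.erase v) (induceEdges (verts.erase v) E)) :
    (∃ w, w ≠ u ∧ PrimAdj verts E v w ∧
        IsModule (verts.erase v) (induceEdges (verts.erase v) E) {u, w}) ∨
      (∀ e ∈ E, u ∈ e → v ∈ e) := by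
  have hYmem : ∀ x, x ∈ verts \ {v, u} ↔ x ∈ verts ∧ x ≠ v ∧ x ≠ u := by
    intro x
    rw [Finset.mem_sdiff, Finset.mem_insert, Finset.mem_singleton]
    tauto
  have hcard : 3 ≤ (verts.erase v).card := by
    rw [Finset.card_erase_of_mem hv]; omega
  rw [IsPrime, not_and] at hnp
  have hB := hnp hcard
  push_neg at hB
  obtain ⟨M, hM, h1, h2, h3s⟩ := hB
  have hYX : verts \ {v, u} ⊆ verts.erase v := by
    intro x hx
    rw [hYmem] at hx
    exact Finset.mem_erase.mpr ⟨hx.2.1, hx.1⟩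
  have hMX : M ⊆ verts.erase v := hM.1
  have hMY := isModule_inter hM hYX
  rcases hprime.2 (M ∩ (verts \ {v, u})) hMY with hcase | hcase | ⟨w, hcase⟩
  · -- M ∩ Y = ∅ : M ⊆ {u}, contradiction
    exfalso
    have hMu : M ⊆ {u} := by
      intro x hx
      by_contra hxu
      rw [Finset.mem_singleton] at hxu
      have hxX := Finset.mem_erase.mp (hMX hx)
      have : x ∈ M ∩ (verts \ {v, u}) :=
        Finset.mem_inter.mpr ⟨hx, (hYmem x).mpr ⟨hxX.2, hxX.1, hxu⟩⟩
      rw [hcase] at this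
      exact absurd this (Finset.notMem_empty x)
    rcases Finset.subset_singleton_iff.mp hMu with h | h
    · exact h1.ne_empty h
    · exact h3s u h
  · -- M ∩ Y = Y : M = Y, right branch
    have hYM : verts \ {v, u} ⊆ M := by
      intro x hx
      have : x ∈ M ∩ (verts \ {v, u}) := by rw [hcase]; exact hx
      exact (Finset.mem_inter.mp this).1
    have huM : u ∉ M := by
      intro huM
      apply h2
      apply Finset.Subset.antisymm hMX
      intro x hx
      obtain ⟨hxv, hxverts⟩ := Finset.mem_erase.mp hx
      by_cases hxu : x = u
      · exact hxu ▸ huM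
      · exact hYM ((hYmem x).mpr ⟨hxverts, hxv, hxu⟩)
    have hMeq : M = verts \ {v, u} := by
      apply Finset.Subset.antisymm _ hYM
      intro x hx
      have hxX := Finset.mem_erase.mp (hMX hx)
      refine (hYmem x).mpr ⟨hxX.2, hxX.1, ?_⟩
      intro hxu
      exact huM (hxu ▸ hx)
    right
    intro e heE hue
    by_contra hve
    have heX : e ∈ induceEdges (verts.erase v) E := by
      refine mem_induceEdges.mpr ⟨heE, ?_⟩
      intro x hx
      exact Finset.mem_erase.mpr ⟨fun h => hve (h ▸ hx), (h3 e heE).1 hx⟩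
    have hintu : e ∩ M = e.erase u := by
      rw [hMeq]
      ext x
      simp only [Finset.mem_inter, Finset.mem_erase, hYmem]
      constructor
      · rintro ⟨hxe, _, _, hxu⟩
        exact ⟨hxu, hxe⟩
      · rintro ⟨hxu, hxe⟩
        exact ⟨hxe, (h3 e heE).1 hxe, fun h => hve (h ▸ hxe), hxu⟩
    have hne1 : (e ∩ M).Nonempty := by
      rw [hintu, ← Finset.card_pos, Finset.card_erase_of_mem hue, (h3 e heE).2]
      omega
    have hne2 : (e \ M).Nonempty := by
      refine ⟨u, Finset.mem_sdiff.mpr ⟨hue, ?_⟩⟩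
      rw [hMeq, hYmem]
      tauto
    obtain ⟨mm, hmmM, hi, _⟩ := hM.2 e heX hne1 hne2
    have : (e ∩ M).card = 1 := by rw [hi]; exact Finset.card_singleton mm
    rw [hintu, Finset.card_erase_of_mem hue, (h3 e heE).2] at this
    omega
  · -- M ∩ Y = {w} : M = {u, w}, left branch
    left
    have hwY : w ∈ verts \ {v, u} := by
      have : w ∈ M ∩ (verts \ {v, u}) := by
        rw [hcase]; exact Finset.mem_singleton_self w
      exact (Finset.mem_inter.mp this).2
    have hwM : w ∈ M := by
      have : w ∈ M ∩ (verts \ {v, u}) := by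
        rw [hcase]; exact Finset.mem_singleton_self w
      exact (Finset.mem_inter.mp this).1
    obtain ⟨hwverts, hwv, hwu⟩ := (hYmem w).mp hwY
    have hMsub : M ⊆ {u, w} := by
      intro x hx
      have hxX := Finset.mem_erase.mp (hMX hx)
      by_cases hxu : x = u
      · exact Finset.mem_insert.mpr (Or.inl hxu)
      · have : x ∈ M ∩ (verts \ {v, u}) :=
          Finset.mem_inter.mpr ⟨hx, (hYmem x).mpr ⟨hxX.2, hxX.1, hxu⟩⟩
        rw [hcase] at this
        exact Finset.mem_insert.mpr (Or.inr this)
    have huM : u ∈ M := by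
      by_contra huM
      apply h3s w
      apply Finset.Subset.antisymm
      · intro x hx
        rcases Finset.mem_insert.mp (hMsub hx) with h | h
        · exact absurd (h ▸ hx) huM
        · exact h
      · exact Finset.singleton_subset_iff.mpr hwM
    have hMeq : M = {u, w} := by
      apply Finset.Subset.antisymm hMsub
      intro x hx
      rcases Finset.mem_insert.mp hx with rfl | hx'
      · exact huM
      · rw [Finset.mem_singleton] at hx'
        exact hx' ▸ hwM
    rw [hMeq] at hM
    have hprime' := swap_prime h3 hv hu hwverts (Ne.symm hvu) hwv (Ne.symm hwu) hM hprime
    exact ⟨w, hwu, ⟨fun h => hwv h.symm, hv, hwverts, hprime'⟩, hM⟩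

lemma isolated_contra {verts : Finset α} {E : Set (Finset α)} (h3 : Is3Hypergraph verts E)
    (h5 : 5 ≤ verts.card) {x y z : α} (hx : x ∈ verts) (hy : y ∈ verts) (hz : z ∈ verts)
    (hxy : x ≠ y) (hxz : x ≠ z) (hyz : y ≠ z)
    (hE : ∀ e ∈ E, z ∈ e → y ∈ e)
    (hprime : IsPrime (verts \ {x, y}) (induceEdges (verts \ {x, y}) E)) : False := by
  set U := verts \ {x, y} with hU
  have hUmem : ∀ t, t ∈ U ↔ t ∈ verts ∧ t ≠ x ∧ t ≠ y := by
    intro t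
    rw [hU, Finset.mem_sdiff, Finset.mem_insert, Finset.mem_singleton]
    tauto
  have hzU : z ∈ U := (hUmem z).mpr ⟨hz, Ne.symm hxz, Ne.symm hyz⟩
  have hyU : y ∉ U := fun h => ((hUmem y).mp h).2.2 rfl
  have hmod : IsModule U (induceEdges U E) (U.erase z) := by
    constructor
    · exact Finset.erase_subset z U
    · intro e he h1 h2
      exfalso
      obtain ⟨heE, heU⟩ := mem_induceEdges.mp he
      obtain ⟨t, ht⟩ := h2
      obtain ⟨hte, htM⟩ := Finset.mem_sdiff.mp ht
      have htz : t = z := by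
        by_contra htz
        exact htM (Finset.mem_erase.mpr ⟨htz, heU hte⟩)
      subst htz
      exact hyU (heU (hE e heE hte))
  have hcard : 2 ≤ (U.erase z).card := by
    rw [Finset.card_erase_of_mem hzU, hU, Finset.card_sdiff_of_subset]
    · rw [Finset.card_insert_of_notMem (by simp [hxy]), Finset.card_singleton]
      omega
    · intro t ht
      rcases Finset.mem_insert.mp ht with rfl | ht'
      · exact hx
      · rw [Finset.mem_singleton] at ht'
        exact ht' ▸ hy
  rcases hprime.2 (U.erase z) hmod with h | h | ⟨t, ht⟩
  · rw [h] at hcard; simp at hcard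
  · have : z ∉ U.erase z := Finset.notMem_erase z U
    rw [h] at this
    exact this hzU
  · rw [ht, Finset.card_singleton] at hcard
    omega

end Helpers3

theorem even_path_component_meets_edges_in_pair {α : Type*} [DecidableEq α]
    (verts : Finset α) (edges : Set (Finset α)) (h3 : Is3Hypergraph verts edges)
    (hc : IsCritical verts edges) (h5 : 5 ≤ verts.card)
    (hnc : ¬ IsCircular verts edges)
    (m : ℕ) (φ : ℕ → α) (hinj : Set.InjOn φ (Set.Iio m))
    (hsub : (Finset.range m).image φ ⊆ verts)
    (hpath : ∀ i < m, ∀ j < m, (PrimAdj verts edges (φ i) (φ j) ↔ (j = i + 1 ∨ i = j + 1)))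
    (hclosed : ∀ i < m, ∀ w, PrimAdj verts edges (φ i) w → ∃ j < m, w = φ j)
    (hm0 : 0 < m) (hmeven : Even m) :
    ∀ e ∈ edges, (e ∩ (Finset.range m).image φ).Nonempty →
      (e \ (Finset.range m).image φ).Nonempty →
      ∃ i j, i ≤ j ∧ 2 * j + 1 < m ∧
        e ∩ (Finset.range m).image φ = {φ (2 * i), φ (2 * j + 1)} := by
  intro e he hne1 hne2
  have hm2 : 2 ≤ m := by
    rcases hmeven with ⟨t, ht⟩; omega
  have hmE : m % 2 = 0 := Nat.even_iff.mp hmeven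
  have hinj' : ∀ i j, i < m → j < m → φ i = φ j → i = j := fun i j hi hj h =>
    hinj (Set.mem_Iio.mpr hi) (Set.mem_Iio.mpr hj) h
  have hφv : ∀ k, k < m → φ k ∈ verts := fun k hk =>
    hsub (Finset.mem_image_of_mem φ (Finset.mem_range.mpr hk))
  have hφC : ∀ k, k < m → φ k ∈ (Finset.range m).image φ := fun k hk =>
    Finset.mem_image_of_mem φ (Finset.mem_range.mpr hk)
  have hCmem : ∀ x, x ∈ (Finset.range m).image φ → ∃ j, j < m ∧ φ j = x := by
    intro x hx
    obtain ⟨j, hj, rfl⟩ := Finset.mem_image.mp hx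
    exact ⟨j, Finset.mem_range.mp hj, rfl⟩
  have hpp : ∀ k, k + 1 < m → IsPrime (verts \ {φ k, φ (k+1)})
      (induceEdges (verts \ {φ k, φ (k+1)}) edges) := by
    intro k hk
    exact ((hpath k (by omega) (k+1) hk).mpr (Or.inl rfl)).2.2.2
  -- interior modules
  have hintmod : ∀ k, 1 ≤ k → k + 1 < m →
      IsModule (verts.erase (φ k)) (induceEdges (verts.erase (φ k)) edges)
        {φ (k+1), φ (k-1)} := by
    intro k hk1 hk2
    have hnp := hc.2 (φ k) (hφv k (by omega))
    have hvu : φ k ≠ φ (k+1) := fun h => by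
      have := hinj' k (k+1) (by omega) hk2 h; omega
    rcases dichotomy h3 h5 (hφv k (by omega)) (hφv (k+1) hk2) hvu (hpp k hk2) hnp with
      ⟨w, hwu, hadj, hmod⟩ | hdeg
    · obtain ⟨j, hj, rfl⟩ := hclosed k (by omega) w hadj
      rcases (hpath k (by omega) j hj).mp hadj with h | h
      · exact absurd (by rw [h]) hwu
      · have hjk : j = k - 1 := by omega
        rw [hjk] at hmod
        exact hmod
    · exfalso
      have hpp' := hpp (k-1) (by omega)
      rw [show k - 1 + 1 = k by omega] at hpp'
      exact isolated_contra h3 h5 (hφv (k-1) (by omega)) (hφv k (by omega)) (hφv (k+1) hk2)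
        (fun h => by have := hinj' (k-1) k (by omega) (by omega) h; omega)
        (fun h => by have := hinj' (k-1) (k+1) (by omega) hk2 h; omega)
        (fun h => by have := hinj' k (k+1) (by omega) hk2 h; omega)
        hdeg hpp'
  -- endpoint facts
  have hE0 : ∀ e' ∈ edges, φ 1 ∈ e' → φ 0 ∈ e' := by
    have hnp := hc.2 (φ 0) (hφv 0 (by omega))
    have hvu : φ 0 ≠ φ 1 := fun h => by
      have := hinj' 0 1 (by omega) (by omega) h; omega
    rcases dichotomy h3 h5 (hφv 0 (by omega)) (hφv 1 (by omega)) hvu (hpp 0 (by omega)) hnp with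
      ⟨w, hwu, hadj, _⟩ | hdeg
    · exfalso
      obtain ⟨j, hj, rfl⟩ := hclosed 0 (by omega) w hadj
      rcases (hpath 0 (by omega) j hj).mp hadj with h | h
      · exact hwu (by rw [h])
      · omega
    · exact hdeg
  have hEm : ∀ e' ∈ edges, φ (m-2) ∈ e' → φ (m-1) ∈ e' := by
    have hnp := hc.2 (φ (m-1)) (hφv (m-1) (by omega))
    have hvu : φ (m-1) ≠ φ (m-2) := fun h => by
      have := hinj' (m-1) (m-2) (by omega) (by omega) h; omega
    have hprime : IsPrime (verts \ {φ (m-1), φ (m-2)})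
        (induceEdges (verts \ {φ (m-1), φ (m-2)}) edges) :=
      ((hpath (m-1) (by omega) (m-2) (by omega)).mpr (Or.inr (by omega))).2.2.2
    rcases dichotomy h3 h5 (hφv (m-1) (by omega)) (hφv (m-2) (by omega)) hvu hprime hnp with
      ⟨w, hwu, hadj, _⟩ | hdeg
    · exfalso
      obtain ⟨j, hj, rfl⟩ := hclosed (m-1) (by omega) w hadj
      rcases (hpath (m-1) (by omega) j hj).mp hadj with h | h
      · omega
      · exact hwu (by rw [show j = m - 2 by omega])
    · exact hdeg
  -- sliding steps
  have hstep_down : ∀ a, 2 ≤ a → a < m → ∀ r : Finset α, φ (a-1) ∉ r → φ (a-2) ∉ r →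
      φ a ∉ r → insert (φ a) r ∈ edges → insert (φ (a-2)) r ∈ edges := by
    intro a ha2 ham r hr1 hr2 har he'
    have hmod := hintmod (a-1) (by omega) (by omega)
    rw [show a - 1 + 1 = a by omega, show a - 1 - 1 = a - 2 by omega] at hmod
    have hein : insert (φ a) r ∈ induceEdges (verts.erase (φ (a-1))) edges := by
      refine mem_induceEdges.mpr ⟨he', ?_⟩
      intro x hx
      refine Finset.mem_erase.mpr ⟨?_, (h3 _ he').1 hx⟩
      intro hxx
      subst hxx
      rcases Finset.mem_insert.mp hx with h | h
      · have := hinj' (a-1) a (by omega) ham h; omega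
      · exact hr1 h
    have hres := module_pair_swap hmod hein (Finset.mem_insert_self _ _)
      (sdiff_pair_nonempty h3 he' _ _)
    have hset : (insert (φ a) r \ {φ a}) ∪ {φ (a-2)} = insert (φ (a-2)) r := by
      ext t
      simp only [Finset.mem_union, Finset.mem_sdiff, Finset.mem_insert, Finset.mem_singleton]
      constructor
      · rintro (⟨h1, h2⟩ | h1)
        · rcases h1 with h1 | h1
          · exact absurd h1 h2
          · exact Or.inr h1
        · exact Or.inl h1
      · rintro (h1 | h1)
        · exact Or.inr h1
        · exact Or.inl ⟨Or.inr h1, fun h => har (by rw [h] at h1; exact h1)⟩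
    rw [hset] at hres
    exact (mem_induceEdges.mp hres).1
  have hstep_up : ∀ a, a + 2 < m → ∀ r : Finset α, φ (a+1) ∉ r → φ (a+2) ∉ r →
      φ a ∉ r → insert (φ a) r ∈ edges → insert (φ (a+2)) r ∈ edges := by
    intro a ham r hr1 hr2 har he'
    have hmod := hintmod (a+1) (by omega) (by omega)
    rw [show a + 1 + 1 = a + 2 by omega, show a + 1 - 1 = a by omega,
      Finset.pair_comm] at hmod
    have hein : insert (φ a) r ∈ induceEdges (verts.erase (φ (a+1))) edges := by
      refine mem_induceEdges.mpr ⟨he', ?_⟩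
      intro x hx
      refine Finset.mem_erase.mpr ⟨?_, (h3 _ he').1 hx⟩
      intro hxx
      subst hxx
      rcases Finset.mem_insert.mp hx with h | h
      · have := hinj' (a+1) a (by omega) (by omega) h; omega
      · exact hr1 h
    have hres := module_pair_swap hmod hein (Finset.mem_insert_self _ _)
      (sdiff_pair_nonempty h3 he' _ _)
    have hset : (insert (φ a) r \ {φ a}) ∪ {φ (a+2)} = insert (φ (a+2)) r := by
      ext t
      simp only [Finset.mem_union, Finset.mem_sdiff, Finset.mem_insert, Finset.mem_singleton]
      constructor
      · rintro (⟨h1, h2⟩ | h1)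
        · rcases h1 with h1 | h1
          · exact absurd h1 h2
          · exact Or.inr h1
        · exact Or.inl h1
      · rintro (h1 | h1)
        · exact Or.inr h1
        · exact Or.inl ⟨Or.inr h1, fun h => har (by rw [h] at h1; exact h1)⟩
    rw [hset] at hres
    exact (mem_induceEdges.mp hres).1
  -- full slides
  have hslide_down : ∀ a, a < m → ∀ r : Finset α, (∀ j, j < a → φ j ∉ r) → φ a ∉ r →
      insert (φ a) r ∈ edges → insert (φ (a % 2)) r ∈ edges := by
    intro a
    induction a using Nat.strong_induction_on with
    | _ a ih =>
      intro ham r hr har he'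
      by_cases h2 : a < 2
      · rw [Nat.mod_eq_of_lt h2]; exact he'
      · have step := hstep_down a (by omega) ham r (hr (a-1) (by omega))
          (hr (a-2) (by omega)) har he'
        have hrec := ih (a-2) (by omega) (by omega) r (fun j hj => hr j (by omega))
          (hr (a-2) (by omega)) step
        rwa [show (a-2) % 2 = a % 2 by omega] at hrec
  have hslide_up : ∀ n a, m - a ≤ n → a < m → ∀ r : Finset α,
      (∀ j, a < j → j < m → φ j ∉ r) → φ a ∉ r → insert (φ a) r ∈ edges →
      ∃ a', a' < m ∧ m ≤ a' + 2 ∧ a' % 2 = a % 2 ∧ insert (φ a') r ∈ edges := by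
    intro n
    induction n with
    | zero => intro a h1 h2; omega
    | succ n ih =>
      intro a h1 ham r hr har he'
      by_cases hend : m ≤ a + 2
      · exact ⟨a, ham, hend, rfl, he'⟩
      · have step := hstep_up a (by omega) r (hr (a+1) (by omega) (by omega))
          (hr (a+2) (by omega) (by omega)) har he'
        obtain ⟨a', h1', h2', h3', h4'⟩ := ih (a+2) (by omega) (by omega) r
          (fun j hj1 hj2 => hr j (by omega) hj2) (hr (a+2) (by omega) (by omega)) step
        exact ⟨a', h1', h2', by omega, h4'⟩
  -- cardinality of the intersection
  have hesub := (h3 e he).1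
  have hecard := (h3 e he).2
  have hAcard : (e ∩ (Finset.range m).image φ).card ≤ 2 := by
    by_contra hA
    push_neg at hA
    have hle : (e ∩ (Finset.range m).image φ).card ≤ e.card :=
      Finset.card_le_card Finset.inter_subset_left
    have heq : e ∩ (Finset.range m).image φ = e :=
      Finset.eq_of_subset_of_card_le Finset.inter_subset_left (by omega)
    obtain ⟨t, ht⟩ := hne2
    obtain ⟨hte, htC⟩ := Finset.mem_sdiff.mp ht
    have hte' : t ∈ e ∩ (Finset.range m).image φ := by rw [heq]; exact hte
    exact htC (Finset.mem_inter.mp hte').2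
  have hA1 : 1 ≤ (e ∩ (Finset.range m).image φ).card := Finset.card_pos.mpr hne1
  have hAcases : (e ∩ (Finset.range m).image φ).card = 1 ∨
      (e ∩ (Finset.range m).image φ).card = 2 := by omega
  rcases hAcases with h1 | h2
  · -- |e ∩ C| = 1 : impossible
    exfalso
    obtain ⟨x, hx⟩ := Finset.card_eq_one.mp h1
    have hxmem : x ∈ e ∩ (Finset.range m).image φ := by
      rw [hx]; exact Finset.mem_singleton_self x
    have hxe : x ∈ e := (Finset.mem_inter.mp hxmem).1
    have hxC : x ∈ (Finset.range m).image φ := (Finset.mem_inter.mp hxmem).2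
    obtain ⟨a, ham, rfl⟩ := hCmem x hxC
    set r := e.erase (φ a) with hrdef
    have hr : ∀ j, j < m → φ j ∉ r := by
      intro j hj hjr
      obtain ⟨hjne, hje⟩ := Finset.mem_erase.mp hjr
      have hj' : φ j ∈ e ∩ (Finset.range m).image φ :=
        Finset.mem_inter.mpr ⟨hje, hφC j hj⟩
      rw [hx] at hj'
      exact hjne (Finset.mem_singleton.mp hj')
    have har : φ a ∉ r := Finset.notMem_erase _ _
    have he' : insert (φ a) r ∈ edges := by
      rw [hrdef, Finset.insert_erase hxe]; exact he
    rcases Nat.even_or_odd a with hev | hod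
    · obtain ⟨a', h1', h2', h3', h4'⟩ := hslide_up (m - a) a le_rfl ham r
        (fun j _ hj2 => hr j hj2) har he'
      have ha' : a' = m - 2 := by
        have haE : a % 2 = 0 := Nat.even_iff.mp hev
        omega
      rw [ha'] at h4'
      have hmem := hEm _ h4' (Finset.mem_insert_self _ _)
      rcases Finset.mem_insert.mp hmem with h | h
      · have := hinj' (m-1) (m-2) (by omega) (by omega) h; omega
      · exact hr (m-1) (by omega) h
    · have hslid := hslide_down a ham r (fun j hj => hr j (by omega)) har he'
      rw [Nat.odd_iff.mp hod] at hslid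
      have hmem := hE0 _ hslid (Finset.mem_insert_self _ _)
      rcases Finset.mem_insert.mp hmem with h | h
      · have := hinj' 0 1 (by omega) (by omega) h; omega
      · exact hr 0 (by omega) h
  · -- |e ∩ C| = 2
    obtain ⟨x, y, hxy, hA⟩ := Finset.card_eq_two.mp h2
    have hxmem : x ∈ e ∩ (Finset.range m).image φ := by
      rw [hA]; exact Finset.mem_insert_self _ _
    have hymem : y ∈ e ∩ (Finset.range m).image φ := by
      rw [hA]; exact Finset.mem_insert_of_mem (Finset.mem_singleton_self y)
    obtain ⟨a0, ha0, rfl⟩ := hCmem x (Finset.mem_inter.mp hxmem).2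
    obtain ⟨b0, hb0, rfl⟩ := hCmem y (Finset.mem_inter.mp hymem).2
    have hab0 : a0 ≠ b0 := fun h => hxy (by rw [h])
    obtain ⟨a, b, hab, ham, hbm, hAeq⟩ : ∃ a b, a < b ∧ a < m ∧ b < m ∧
        e ∩ (Finset.range m).image φ = {φ a, φ b} := by
      rcases Nat.lt_or_ge a0 b0 with h | h
      · exact ⟨a0, b0, h, ha0, hb0, hA⟩
      · exact ⟨b0, a0, by omega, hb0, ha0, by rw [hA, Finset.pair_comm]⟩
    have hae : φ a ∈ e := by
      have : φ a ∈ e ∩ (Finset.range m).image φ := by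
        rw [hAeq]; exact Finset.mem_insert_self _ _
      exact (Finset.mem_inter.mp this).1
    have hbe : φ b ∈ e := by
      have : φ b ∈ e ∩ (Finset.range m).image φ := by
        rw [hAeq]; exact Finset.mem_insert_of_mem (Finset.mem_singleton_self _)
      exact (Finset.mem_inter.mp this).1
    have hmemAC : ∀ j, j < m → φ j ∈ e → (j = a ∨ j = b) := by
      intro j hj hje
      have hj' : φ j ∈ e ∩ (Finset.range m).image φ :=
        Finset.mem_inter.mpr ⟨hje, hφC j hj⟩
      rw [hAeq] at hj'
      rcases Finset.mem_insert.mp hj' with h | h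
      · exact Or.inl (hinj' j a hj ham h)
      · exact Or.inr (hinj' j b hj hbm (Finset.mem_singleton.mp h))
    have haev : a % 2 = 0 := by
      by_contra hodd
      have ha1 : a % 2 = 1 := by omega
      set r := e.erase (φ a) with hrdef
      have har : φ a ∉ r := Finset.notMem_erase _ _
      have hr : ∀ j, j < a → φ j ∉ r := by
        intro j hj hjr
        obtain ⟨hjne, hje⟩ := Finset.mem_erase.mp hjr
        rcases hmemAC j (by omega) hje with h | h
        · omega
        · omega
      have he' : insert (φ a) r ∈ edges := by
        rw [hrdef, Finset.insert_erase hae]; exact he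
      have hslid := hslide_down a ham r hr har he'
      rw [ha1] at hslid
      have h0 := hE0 _ hslid (Finset.mem_insert_self _ _)
      rcases Finset.mem_insert.mp h0 with h | h
      · have := hinj' 0 1 (by omega) (by omega) h; omega
      · obtain ⟨hjne, hje⟩ := Finset.mem_erase.mp h
        rcases hmemAC 0 (by omega) hje with h' | h'
        · omega
        · omega
    have hbod : b % 2 = 1 := by
      by_contra heven
      have hb0' : b % 2 = 0 := by omega
      set r := e.erase (φ b) with hrdef
      have har : φ b ∉ r := Finset.notMem_erase _ _
      have hr : ∀ j, b < j → j < m → φ j ∉ r := by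
        intro j hj1 hj2 hjr
        obtain ⟨hjne, hje⟩ := Finset.mem_erase.mp hjr
        rcases hmemAC j hj2 hje with h | h
        · omega
        · omega
      have he' : insert (φ b) r ∈ edges := by
        rw [hrdef, Finset.insert_erase hbe]; exact he
      obtain ⟨a', h1', h2', h3', h4'⟩ := hslide_up (m - b) b le_rfl hbm r hr har he'
      have ha' : a' = m - 2 := by omega
      rw [ha'] at h4'
      have hmem := hEm _ h4' (Finset.mem_insert_self _ _)
      rcases Finset.mem_insert.mp hmem with h | h
      · have := hinj' (m-1) (m-2) (by omega) (by omega) h; omega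
      · obtain ⟨hjne, hje⟩ := Finset.mem_erase.mp h
        rcases hmemAC (m-1) (by omega) hje with h' | h'
        · omega
        · omega
    refine ⟨a / 2, b / 2, by omega, by omega, ?_⟩
    rw [show 2 * (a / 2) = a by omega, show 2 * (b / 2) + 1 = b by omega]
    exact hAeq
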